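/- For any binary sequence x of length n and any positive integer t ≤ n, the cardinality of the deletion sphere satisfies C(‖x‖−t+1, t) ≤ #dS^t(x) ≤ C(‖x‖+t−1, t). -/

import Mathlib

open Filter Finset

/-- The number of runs of a binary sequence (maximal blocks of equal consecutive symbols). -/
def runsCount (x : List Bool) : ℕ := (x.destutter (· ≠ ·)).length

/-- The deletion sphere `dS^t(x)`: all sequences obtained from `x` by deleting `t` symbols,
i.e. the sublists of `x` of length `x.length - t`. -/
def delSphere (t : ℕ) (x : List Bool) : Set (List Bool) :=
  {y | y.Sublist x ∧ y.length = x.length - t}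

/-- `dS^t(X)` for a set `X` of sequences. -/
def delSphereSet (t : ℕ) (X : Set (List Bool)) : Set (List Bool) :=
  ⋃ x ∈ X, delSphere t x

/-- A `t`-deletion code of length `n`: a set of binary sequences of length `n`
with pairwise disjoint deletion spheres. -/
def IsDeletionCode (t n : ℕ) (C : Set (List Bool)) : Prop :=
  (∀ c ∈ C, c.length = n) ∧
  ∀ c ∈ C, ∀ d ∈ C, c ≠ d → delSphere t c ∩ delSphere t d = ∅

/-- A perfect `t`-deletion code of length `n`: the deletion spheres of codewords
cover all of `𝔹^{n-t}`. -/
def IsPerfectDeletionCode (t n : ℕ) (C : Set (List Bool)) : Prop :=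
  IsDeletionCode t n C ∧ delSphereSet t C = {y : List Bool | y.length = n - t}

/-- `M^t(n)`: the maximum cardinality of a `t`-deletion code of length `n`. -/
noncomputable def maxDelCodeSize (t n : ℕ) : ℕ :=
  sSup {m : ℕ | ∃ C : Set (List Bool), IsDeletionCode t n C ∧ C.ncard = m}

namespace LevAux


def rleCons (a : Bool) : List (Bool × ℕ) → List (Bool × ℕ)
  | [] => [(a, 1)]
  | (b, k) :: rs => if a = b then (b, k+1) :: rs else (a,1) :: (b,k) :: rs

def rle : List Bool → List (Bool × ℕ)
  | [] => []
  | a :: l => rleCons a (rle l)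

lemma rle_join : ∀ x : List Bool, ((rle x).map fun p => List.replicate p.2 p.1).flatten = x
  | [] => rfl
  | a :: l => by
    have ih := rle_join l
    rw [rle]
    rcases h : rle l with _ | ⟨⟨b, k⟩, rs⟩ <;> rw [h] at ih <;> rw [rleCons]
    · simp at ih; simp [← ih]
    · by_cases hab : a = b
      · subst hab
        rw [if_pos rfl]
        simp only [List.map_cons, List.flatten_cons] at ih ⊢
        rw [List.replicate_succ, List.cons_append, ih]
      · rw [if_neg hab]
        simp only [List.map_cons, List.flatten_cons] at ih ⊢
        rw [ih]; simp

lemma destutter'_head? {α : Type*} (R : α → α → Prop) [DecidableRel R] :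
    ∀ (l : List α) (a : α), (l.destutter' R a).head? = some a
  | [], a => rfl
  | b :: l, a => by
    by_cases h : R a b
    · rw [List.destutter'_cons_pos _ h]; rfl
    · rw [List.destutter'_cons_neg _ h]; exact destutter'_head? R l a

lemma rle_ne_nil (a : Bool) (l : List Bool) : rle (a :: l) ≠ [] := by
  intro h
  have := rle_join (a :: l)
  rw [h] at this
  simp at this

lemma rle_map_fst : ∀ x : List Bool, (rle x).map Prod.fst = x.destutter (· ≠ ·)
  | [] => rfl
  | [a] => by simp [rle, rleCons, List.destutter]
  | a :: c :: l₂ => by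
    have ih := rle_map_fst (c :: l₂)
    rw [List.destutter_cons_cons, rle]
    rcases h : rle (c :: l₂) with _ | ⟨⟨b, k⟩, rs⟩
    · exact absurd h (rle_ne_nil c l₂)
    · rw [h] at ih
      rw [rleCons]
      have hb : b = c := by
        have h1 : ((c :: l₂).destutter (· ≠ ·)).head? = some c := by
          rw [List.destutter_cons']; exact destutter'_head? _ _ _
        rw [← ih] at h1; simpa using h1
      subst hb
      by_cases hac : a = b
      · subst hac
        rw [if_pos rfl, if_neg (by simp)]
        rw [← List.destutter_cons']
        simpa using ih
      · rw [if_neg hac, if_pos (by exact hac), ← List.destutter_cons']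
        rw [← ih]; simp

lemma rle_length (x : List Bool) : (rle x).length = runsCount x := by
  rw [runsCount, ← rle_map_fst, List.length_map]

lemma rle_sum (x : List Bool) : ((rle x).map Prod.snd).sum = x.length := by
  conv_rhs => rw [← rle_join x]
  rw [List.length_flatten, List.map_map]
  congr 1
  simp [Function.comp]

lemma exists_decomp : ∀ (rs : List (Bool × ℕ)) (y : List Bool),
    y.Sublist ((rs.map fun p => List.replicate p.2 p.1).flatten) →
    ∃ ks : List ℕ, List.Forall₂ (· ≤ ·) ks (rs.map Prod.snd) ∧
      y = ((ks.zip rs).map fun q => List.replicate q.1 q.2.1).flatten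
  | [], y, h => by
    simp at h; subst h; exact ⟨[], List.Forall₂.nil, rfl⟩
  | (b, k) :: rs, y, h => by
    simp only [List.map_cons, List.flatten_cons] at h
    rw [List.sublist_append_iff] at h
    obtain ⟨y₁, y₂, rfl, h1, h2⟩ := h
    rw [List.sublist_replicate_iff] at h1
    obtain ⟨k', hk', rfl⟩ := h1
    obtain ⟨ks, hks, rfl⟩ := exists_decomp rs y₂ h2
    exact ⟨k' :: ks, List.Forall₂.cons hk' hks, by simp⟩

lemma card_multiset_sum {β : Type*} [DecidableEq β] (s : Finset β) (f : β → Multiset (Fin 0 ⊕ β) → ℕ) : True := trivial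

lemma card_sum' {ι β : Type*} [DecidableEq ι] (s : Finset ι) (f : ι → Multiset β) :
    Multiset.card (∑ i ∈ s, f i) = ∑ i ∈ s, Multiset.card (f i) := by
  induction s using Finset.induction with
  | empty => simp
  | insert _ _ h ih => simp [Finset.sum_insert h, ih]

lemma sum_list_get (ks : List ℕ) : ∑ i : Fin ks.length, ks.get i = ks.sum := by
  conv_rhs => rw [← List.ofFn_get ks]
  rw [List.sum_ofFn]

lemma sum_map_get {β : Type*} [AddCommMonoid β] (rs : List (Bool × ℕ)) (f : Bool × ℕ → β) :
    (rs.map f).sum = ∑ i : Fin rs.length, f (rs.get i) := by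
  conv_lhs => rw [← List.ofFn_get rs, List.map_ofFn, List.sum_ofFn]
  rfl

lemma upper (x : List Bool) (t : ℕ) (ht : t ≤ x.length) :
    ((x.sublistsLen (x.length - t)).toFinset).card ≤ (runsCount x + t - 1).choose t := by
  classical
  set rs := rle x with hrs
  set r := rs.length with hr
  set ℓ : Fin r → ℕ := fun i => (rs.get i).2 with hℓ
  set b : Fin r → Bool := fun i => (rs.get i).1 with hb
  have hsumℓ : ∑ i : Fin r, ℓ i = x.length := by
    have h1 := sum_map_get rs Prod.snd
    have h2 : ((rs.map fun p => List.replicate p.2 p.1).flatten).length = x.length := by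
      rw [rle_join]
    rw [List.length_flatten, List.map_map] at h2
    rw [← h2, ← h1]
    congr 1
    simp [Function.comp]
  -- the surjection
  set G : Sym (Fin r) t → List Bool := fun σ =>
    ((List.finRange r).map fun i =>
      List.replicate (ℓ i - Multiset.count i (σ : Multiset (Fin r))) (b i)).flatten with hG
  have hsurj : Set.SurjOn G (↑(Finset.univ : Finset (Sym (Fin r) t)))
      (↑(x.sublistsLen (x.length - t)).toFinset) := by
    intro y hy
    simp only [Finset.coe_sort_coe, Finset.mem_coe, List.mem_toFinset,
      List.mem_sublistsLen] at hy
    obtain ⟨hsub, hylen⟩ := hy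
    obtain ⟨ks, hks, hyeq⟩ := exists_decomp rs y (by rw [rle_join]; exact hsub)
    have hlen : ks.length = r := by
      have := hks.length_eq; simpa using this
    set k : Fin r → ℕ := fun i => ks.get ⟨i, by rw [hlen]; exact i.2⟩ with hk
    have hkl : ∀ i : Fin r, k i ≤ ℓ i := by
      intro i
      rw [List.forall₂_iff_get] at hks
      have := hks.2 i (by rw [hlen]; exact i.2) (by rw [List.length_map]; exact i.2)
      simpa [hk, hℓ] using this
    have hsumk : ∑ i : Fin r, k i = ks.sum :=
      (Fin.sum_congr' (ks.get) (hlen.symm)).trans (sum_list_get ks)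
    have hkssum : ks.sum = x.length - t := by
      have : y.length = ks.sum := by
        rw [hyeq, List.length_flatten, List.map_map]
        have : (List.map (List.length ∘ fun q : ℕ × (Bool × ℕ) => List.replicate q.1 q.2.1)
            (ks.zip rs)) = List.map Prod.fst (ks.zip rs) := by
          apply List.map_congr_left
          intro q _
          simp [Function.comp]
        rw [this, List.map_fst_zip hlen.le]
      rw [← this, hylen]
    -- build the multiset
    set v : Multiset (Fin r) := ∑ i : Fin r, Multiset.replicate (ℓ i - k i) i with hv
    have hcount : ∀ j : Fin r, Multiset.count j v = ℓ j - k j := by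
      intro j
      rw [hv, Multiset.count_sum']
      rw [Finset.sum_eq_single j]
      · simp [Multiset.count_replicate]
      · intro i _ hij
        rw [Multiset.count_replicate, if_neg (by exact fun h => hij h)]
      · simp
    have hcard : Multiset.card v = t := by
      rw [hv, card_sum']
      simp only [Multiset.card_replicate]
      rw [Finset.sum_tsub_distrib _ (fun i _ => hkl i), hsumℓ, hsumk, hkssum,
        Nat.sub_sub_self ht]
    refine ⟨⟨v, hcard⟩, Finset.mem_coe.mpr (Finset.mem_univ _), ?_⟩
    rw [hG]
    simp only
    rw [hyeq]
    congr 1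
    apply List.ext_get
    · simp [hlen]; exact le_rfl
    · intro i h1 h2
      have hi : i < r := by simpa [hlen] using h1
      simp only [List.get_eq_getElem, List.getElem_map, List.getElem_zip, List.getElem_finRange]
      congr 1
      · show ℓ ⟨i, hi⟩ - Multiset.count ⟨i, hi⟩ v = ks.get ⟨i, by rw [hlen]; exact hi⟩
        rw [hcount ⟨i, hi⟩, Nat.sub_sub_self (hkl ⟨i, hi⟩)]
  calc ((x.sublistsLen (x.length - t)).toFinset).card
      ≤ (Finset.univ : Finset (Sym (Fin r) t)).card :=
        Finset.card_le_card_of_surjOn G hsurj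
    _ = (runsCount x + t - 1).choose t := by
        rw [Finset.card_univ, Sym.card_sym_eq_multichoose, Fintype.card_fin,
          Nat.multichoose_eq, hr, hrs, rle_length]


def NS (x : List Bool) (m : ℕ) : Finset (List Bool) := (x.sublistsLen m).toFinset

def BS (x : List Bool) (m : ℕ) (c : Bool) : Finset (List Bool) :=
  (NS x m).filter (fun y => y.head? = some c)

lemma mem_NS {x y : List Bool} {m : ℕ} : y ∈ NS x m ↔ y.Sublist x ∧ y.length = m := by
  simp [NS, List.mem_sublistsLen]

lemma mem_BS {x y : List Bool} {m : ℕ} {c : Bool} :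
    y ∈ BS x m c ↔ (y.Sublist x ∧ y.length = m) ∧ y.head? = some c := by
  simp [BS, mem_NS]

lemma NS_nonempty {x : List Bool} {m : ℕ} (h : m ≤ x.length) : (NS x m).Nonempty :=
  ⟨x.take m, mem_NS.mpr ⟨List.take_sublist _ _, by simp [h]⟩⟩

lemma runsCount_le_length (x : List Bool) : runsCount x ≤ x.length :=
  (List.destutter_sublist _ _).length_le

lemma runsCount_pos (a : Bool) (l : List Bool) : 0 < runsCount (a :: l) := by
  rw [runsCount, List.destutter_cons']
  exact List.length_pos_iff.mpr (List.destutter'_ne_nil l (· ≠ ·))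

lemma runsCount_cons_cons_same (a : Bool) (l : List Bool) :
    runsCount (a :: a :: l) = runsCount (a :: l) := by
  rw [runsCount, List.destutter_cons_cons, if_neg (by simp), ← List.destutter_cons', runsCount]

lemma runsCount_cons_cons_diff {a b : Bool} (h : a ≠ b) (l : List Bool) :
    runsCount (a :: b :: l) = runsCount (b :: l) + 1 := by
  rw [runsCount, List.destutter_cons_cons, if_pos (by exact h), List.length_cons,
    ← List.destutter_cons', runsCount]

lemma BS_lower (a : Bool) (l : List Bool) (m : ℕ) :
    (NS l m).card ≤ (BS (a :: l) (m + 1) a).card := by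
  classical
  apply Finset.card_le_card_of_injOn (fun y => a :: y)
  · intro y hy
    rw [Finset.mem_coe, mem_NS] at hy
    rw [Finset.mem_coe, mem_BS]
    exact ⟨⟨hy.1.cons₂ a, by simp [hy.2]⟩, rfl⟩
  · intro y _ z _ h
    simpa using h

lemma NS_lower (a : Bool) (l : List Bool) (m : ℕ) :
    (NS l m).card + (BS l (m + 1) (!a)).card ≤ (NS (a :: l) (m + 1)).card := by
  classical
  have h1 : ((NS l m).image (a :: ·) ∪ BS l (m + 1) (!a)) ⊆ NS (a :: l) (m + 1) := by
    intro y hy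
    rw [Finset.mem_union] at hy
    rcases hy with hy | hy
    · obtain ⟨w, hw, rfl⟩ := Finset.mem_image.mp hy
      rw [mem_NS] at hw ⊢
      exact ⟨hw.1.cons₂ a, by simp [hw.2]⟩
    · rw [mem_BS] at hy
      rw [mem_NS]
      exact ⟨hy.1.1.trans (List.sublist_cons_self a l), hy.1.2⟩
  have hd : Disjoint ((NS l m).image (a :: ·)) (BS l (m + 1) (!a)) := by
    rw [Finset.disjoint_left]
    intro y hy hz
    obtain ⟨w, _, rfl⟩ := Finset.mem_image.mp hy
    rw [mem_BS] at hz
    simp at hz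
  calc (NS l m).card + (BS l (m + 1) (!a)).card
      = ((NS l m).image (a :: ·)).card + (BS l (m + 1) (!a)).card := by
        rw [Finset.card_image_of_injective _ (fun y z h => by simpa using h)]
    _ = ((NS l m).image (a :: ·) ∪ BS l (m + 1) (!a)).card :=
        (Finset.card_union_of_disjoint hd).symm
    _ ≤ (NS (a :: l) (m + 1)).card := Finset.card_le_card h1

lemma choose_one_le_one (n : ℕ) : Nat.choose 1 n ≤ 1 := by
  match n with
  | 0 => simp
  | 1 => simp
  | (k+2) => rw [Nat.choose_eq_zero_of_lt (by omega)]; omega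

lemma lower_main (x : List Bool) : ∀ (m : ℕ), m ≤ x.length →
    ((runsCount x - (x.length - m) + 1).choose (x.length - m) ≤ (NS x m).card ∧
     ∀ c : Bool, x.head? = some c →
       (runsCount x - (x.length - m)).choose (x.length - m) ≤ (BS x m c).card) := by
  induction x with
  | nil =>
    intro m hm
    simp only [List.length_nil, Nat.le_zero] at hm
    subst hm
    constructor
    · simpa using (NS_nonempty (x := []) (m := 0) le_rfl).card_pos
    · intro c hc; simp at hc
  | cons a l ih =>
    intro m hm
    rcases eq_or_lt_of_le hm with heq | hlt
    · -- m = length, t = 0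
      have ht0 : (a :: l).length - m = 0 := by omega
      rw [ht0]
      constructor
      · simpa using (NS_nonempty hm).card_pos
      · intro c hc
        have hx : (a :: l) ∈ BS (a :: l) m c :=
          mem_BS.mpr ⟨⟨List.Sublist.refl _, heq.symm⟩, hc⟩
        simpa using Finset.card_pos.mpr ⟨_, hx⟩
    · match m with
      | 0 =>
        have hr0 : runsCount (a :: l) - ((a :: l).length - 0) = 0 := by
          have := runsCount_le_length (a :: l); omega
        constructor
        · rw [hr0]
          calc Nat.choose 1 ((a :: l).length - 0) ≤ 1 := choose_one_le_one _
            _ ≤ (NS (a :: l) 0).card := (NS_nonempty (by omega)).card_pos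
        · intro c hc
          rw [hr0, Nat.choose_eq_zero_of_lt (by simp)]
          omega
      | (m' + 1) =>
        match l with
        | [] => simp at hlt
        | b :: l₂ =>
          set L := b :: l₂ with hL
          have hm'le : m' ≤ L.length := by
            simp only [List.length_cons] at hm; omega
          have IH := ih m' hm'le
          set t := L.length - m' with htdef
          clear_value t
          have hx_t : (a :: L).length - (m' + 1) = t := by
            simp only [List.length_cons]; omega
          have ht1 : 1 ≤ t := by
            simp only [List.length_cons] at hlt; omega
          have hLhead : L.head? = some b := rfl
          have hrpos : 0 < runsCount L := runsCount_pos b l₂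
          constructor
          · -- N part
            rw [hx_t]
            by_cases hba : b = a
            · have hrun : runsCount (a :: L) = runsCount L := by
                rw [hL, hba]; exact runsCount_cons_cons_same a l₂
              rw [hrun]
              calc (runsCount L - t + 1).choose t ≤ (NS L m').card := IH.1
                _ ≤ (NS L m').card + (BS L (m' + 1) (!a)).card := Nat.le_add_right _ _
                _ ≤ (NS (a :: L) (m' + 1)).card := NS_lower a L m'
            · have hab : a ≠ b := fun h => hba h.symm
              have hrun : runsCount (a :: L) = runsCount L + 1 :=
                runsCount_cons_cons_diff hab l₂
              rw [hrun]
              set r' := runsCount L with hr'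
              by_cases hcase : t ≤ r'
              · obtain ⟨u, rfl⟩ : ∃ u, t = u + 1 := ⟨t - 1, by omega⟩

                have e1 : r' + 1 - (u + 1) + 1 = (r' - (u + 1) + 1) + 1 := by omega
                rw [e1, Nat.choose_succ_succ']
                have hBterm : (r' - (u + 1) + 1).choose u ≤ (BS L (m' + 1) (!a)).card := by
                  have hm1le : m' + 1 ≤ L.length := by omega
                  have IH2 := (ih (m' + 1) hm1le).2 b hLhead
                  have hLt : L.length - (m' + 1) = u := by omega
                  rw [hLt] at IH2
                  have hb' : b = !a := by cases a <;> cases b <;> simp_all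
                  have : r' - u = r' - (u + 1) + 1 := by omega
                  rw [this] at IH2
                  rwa [hb'] at IH2
                have hNterm : (r' - (u + 1) + 1).choose (u + 1) ≤ (NS L m').card := IH.1
                calc (r' - (u + 1) + 1).choose u + (r' - (u + 1) + 1).choose (u + 1)
                    ≤ (BS L (m' + 1) (!a)).card + (NS L m').card :=
                      Nat.add_le_add hBterm hNterm
                  _ = (NS L m').card + (BS L (m' + 1) (!a)).card := Nat.add_comm _ _
                  _ ≤ (NS (a :: L) (m' + 1)).card := NS_lower a L m'
              · -- t > r' : trivial, choose = 0
                have : r' + 1 - t + 1 ≤ 1 := by omega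
                calc (r' + 1 - t + 1).choose t ≤ (1).choose t :=
                      Nat.choose_le_choose t (by omega)
                  _ ≤ 1 := choose_one_le_one t
                  _ ≤ (NS (a :: L) (m' + 1)).card := by
                      apply (NS_nonempty (x := a :: L) (m := m' + 1) (by
                        simp only [List.length_cons]; omega)).card_pos
          · -- B part
            intro c hc
            have hca : c = a := by simpa using hc.symm
            subst hca
            rw [hx_t]
            have hstep := BS_lower c L m'
            have hN := IH.1
            apply le_trans _ hstep
            apply le_trans _ hN
            apply Nat.choose_le_choose
            by_cases hba : b = c
            · have hrun : runsCount (c :: L) = runsCount L := by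
                rw [hL, hba]; exact runsCount_cons_cons_same c l₂
              omega
            · have hrun : runsCount (c :: L) = runsCount L + 1 :=
                runsCount_cons_cons_diff (fun h => hba h.symm) l₂
              omega

end LevAux

/-- Levenshtein's bounds on the size of a deletion sphere:
`C(‖x‖−t+1, t) ≤ #dS^t(x) ≤ C(‖x‖+t−1, t)`. -/
theorem delSphere_card_bounds (n t : ℕ) (ht : 0 < t) (htn : t ≤ n)
    (x : List Bool) (hx : x.length = n) :
    (runsCount x - t + 1).choose t ≤ (delSphere t x).ncard ∧
      (delSphere t x).ncard ≤ (runsCount x + t - 1).choose t := by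
  classical
  have hset : delSphere t x = ↑(LevAux.NS x (x.length - t)) := by
    ext y
    simp [delSphere, LevAux.mem_NS, Set.mem_setOf_eq]
  rw [hset, Set.ncard_coe_finset]
  constructor
  · have h := (LevAux.lower_main x (x.length - t) (by omega)).1
    have ht' : x.length - (x.length - t) = t := by omega
    rw [ht'] at h
    exact h
  · exact LevAux.upper x t (by omega)
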